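/- Define a word-level spelling length λ on words over the alphabet {X_1,...,X_N, X_1^{-1},...,X_N^{-1}} recursively by λ(e)=0 and λ(U) = min(1 + λ(U_{2:k}), min over j with U(j)=U(1)^{-1} of λ(U_{2:j-1}) + λ(U_{j+1:k})) for a word U of length k. Then λ descends to a function on the free group F(X_1,...,X_N) (i.e., λ(U) = λ(U') whenever U and U' represent the same group element), and on the free group it coincides with the spelling length Λ. -/

import Mathlib

/-- A letter in the alphabet `{X_1,…,X_N, X_1⁻¹,…,X_N⁻¹}`: `(i, true)` is `X_i` and
`(i, false)` is `X_i⁻¹`. -/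
abbrev Letter (N : ℕ) := Fin N × Bool

/-- The inverse letter. -/
def invLetter {N : ℕ} (x : Letter N) : Letter N := (x.1, !x.2)

/-- `lam` is the word-level spelling length: `λ(e) = 0` and
`λ(U) = min(1 + λ(U_{2:k}), min_{j : U(j) = U(1)⁻¹} λ(U_{2:j-1}) + λ(U_{j+1:k}))`. -/
def IsWordSpellingLength {N : ℕ} (lam : List (Letter N) → ℕ) : Prop :=
  lam [] = 0 ∧
    ∀ (x : Letter N) (rest : List (Letter N)),
      lam (x :: rest) =
        ((List.range rest.length).filterMap fun j =>
            if rest[j]? = some (invLetter x) then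
              some (lam (rest.take j) + lam (rest.drop (j + 1)))
            else none).foldl min (1 + lam rest)

/-- The conjugated-generator factor `h * c_i^{±1} * h⁻¹`. -/
def spellingFactor {n : ℕ} (x : FreeGroup (Fin n) × Fin n × Bool) : FreeGroup (Fin n) :=
  x.1 * (if x.2.2 then FreeGroup.of x.2.1 else (FreeGroup.of x.2.1)⁻¹) * x.1⁻¹

/-- `L` is a spelling of `g`: a factorization of `g` into conjugated generators/inverse
generators. -/
def IsSpelling {n : ℕ} (g : FreeGroup (Fin n))
    (L : List (FreeGroup (Fin n) × Fin n × Bool)) : Prop :=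
  (L.map spellingFactor).prod = g

/-- The spelling length `Λ(g)`: the least number of factors among all spellings of `g`. -/
noncomputable def spellingLength {n : ℕ} (g : FreeGroup (Fin n)) : ℕ :=
  sInf {r | ∃ L, IsSpelling g L ∧ L.length = r}

/-- The exponent sum (abelianized degree) of the generator `c_j` in `g`. -/
def degGen {n : ℕ} (g : FreeGroup (Fin n)) (j : Fin n) : ℤ :=
  Multiplicative.toAdd
    ((FreeGroup.lift fun i => if i = j then Multiplicative.ofAdd (1 : ℤ) else 1) g)

namespace WSL

theorem invLetter_invLetter {N : ℕ} (x : Letter N) : invLetter (invLetter x) = x := by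
  simp [invLetter]

theorem invLetter_inj {N : ℕ} {x y : Letter N} (h : invLetter x = invLetter y) : x = y := by
  rw [← invLetter_invLetter x, h, invLetter_invLetter]

theorem foldl_min_le_init : ∀ (l : List ℕ) (a : ℕ), l.foldl min a ≤ a := by
  intro l
  induction l with
  | nil => intro a; exact le_rfl
  | cons b l ih => intro a; exact le_trans (ih _) (min_le_left _ _)

theorem foldl_min_le_mem : ∀ (l : List ℕ) (a b : ℕ), b ∈ l → l.foldl min a ≤ b := by
  intro l
  induction l with
  | nil => intro a b h; cases h
  | cons c l ih =>
    intro a b h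
    rcases List.mem_cons.mp h with rfl | h
    · rw [List.foldl_cons]
      exact le_trans (foldl_min_le_init _ _) (min_le_right _ _)
    · exact ih _ _ h

theorem foldl_min_cases : ∀ (l : List ℕ) (a : ℕ), l.foldl min a = a ∨ l.foldl min a ∈ l := by
  intro l
  induction l with
  | nil => intro a; exact Or.inl rfl
  | cons c l ih =>
    intro a
    rcases ih (min a c) with h | h
    · rw [List.foldl_cons, h]
      rcases min_cases a c with ⟨h', _⟩ | ⟨h', _⟩
      · exact Or.inl h'
      · exact Or.inr (by rw [h']; exact List.mem_cons_self)
    · exact Or.inr (List.mem_cons_of_mem _ h)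

theorem eq_take_cons_drop {α : Type*} {l : List α} {j : ℕ} {a : α} (hj : l[j]? = some a) :
    l = l.take j ++ a :: l.drop (j + 1) := by
  obtain ⟨hlt, hget⟩ := List.getElem?_eq_some_iff.mp hj
  conv_lhs => rw [← List.take_append_drop j l]
  rw [List.drop_eq_getElem_cons hlt, hget]

variable {N : ℕ} {lam : List (Letter N) → ℕ}

theorem le_init (h : IsWordSpellingLength lam) (x : Letter N) (rest : List (Letter N)) :
    lam (x :: rest) ≤ 1 + lam rest := by
  rw [h.2]; exact foldl_min_le_init _ _

theorem le_cand (h : IsWordSpellingLength lam) {x : Letter N} {rest : List (Letter N)} {j : ℕ}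
    (hj : rest[j]? = some (invLetter x)) :
    lam (x :: rest) ≤ lam (rest.take j) + lam (rest.drop (j + 1)) := by
  rw [h.2]
  apply foldl_min_le_mem
  apply List.mem_filterMap.mpr
  refine ⟨j, List.mem_range.mpr (List.getElem?_eq_some_iff.mp hj).1, ?_⟩
  rw [if_pos hj]

theorem lam_cases (h : IsWordSpellingLength lam) (x : Letter N) (rest : List (Letter N)) :
    lam (x :: rest) = 1 + lam rest ∨
      ∃ j, rest[j]? = some (invLetter x) ∧
        lam (x :: rest) = lam (rest.take j) + lam (rest.drop (j + 1)) := by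
  have e := h.2 x rest
  rcases foldl_min_cases
      ((List.range rest.length).filterMap fun j =>
        if rest[j]? = some (invLetter x) then
          some (lam (rest.take j) + lam (rest.drop (j + 1)))
        else none) (1 + lam rest) with hc | hc
  · exact Or.inl (e.trans hc)
  · obtain ⟨j, _, hj⟩ := List.mem_filterMap.mp hc
    by_cases hcond : rest[j]? = some (invLetter x)
    · rw [if_pos hcond] at hj
      exact Or.inr ⟨j, hcond, e.trans (Option.some.inj hj).symm⟩
    · rw [if_neg hcond] at hj; cases hj

theorem lam_single (h : IsWordSpellingLength lam) (x : Letter N) : lam [x] = 1 := by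
  have e := h.2 x []
  simpa [h.1] using e

end WSL

namespace WSL
variable {N : ℕ} {lam : List (Letter N) → ℕ}

theorem subadd (h : IsWordSpellingLength lam) :
    ∀ (U V : List (Letter N)), lam (U ++ V) ≤ lam U + lam V := by
  suffices H : ∀ n (U : List (Letter N)), U.length ≤ n → ∀ V, lam (U ++ V) ≤ lam U + lam V by
    intro U V; exact H U.length U le_rfl V
  intro n
  induction n with
  | zero =>
    intro U hU V
    have : U = [] := by simpa using hU
    subst this
    simp [h.1]
  | succ n ih =>
    intro U hU V
    match U with
    | [] => simp [h.1]
    | x :: rest =>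
      have hrest : rest.length ≤ n := by simpa using hU
      simp only [List.cons_append]
      rcases lam_cases h x rest with hc | ⟨j, hj, hc⟩
      · have h1 := le_init h x (rest ++ V)
        have h2 := ih rest hrest V
        omega
      · have hjlt := (List.getElem?_eq_some_iff.mp hj).1
        have hj' : (rest ++ V)[j]? = some (invLetter x) := by
          rw [List.getElem?_append_left hjlt]; exact hj
        have h1 := le_cand h hj'
        rw [List.take_append_of_le_length (le_of_lt hjlt),
          List.drop_append_of_le_length hjlt] at h1
        simp only [Nat.succ_eq_add_one] at h1
        have h3 : lam (rest.drop (j+1) ++ V) ≤ lam (rest.drop (j+1)) + lam V := by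
          refine ih (rest.drop (j + 1)) ?_ V
          calc (rest.drop (j+1)).length ≤ rest.length := by
                rw [List.length_drop]; omega
            _ ≤ n := hrest
        omega

theorem lam_conj_le (h : IsWordSpellingLength lam) (y : Letter N) (Q : List (Letter N)) :
    lam (y :: (Q ++ [invLetter y])) ≤ lam Q := by
  have hj : (Q ++ [invLetter y])[Q.length]? = some (invLetter y) :=
    List.getElem?_concat_length
  have h1 := le_cand h hj
  rw [List.take_left] at h1
  have hd : (Q ++ [invLetter y]).drop (Q.length + 1) = [] := by
    have := List.drop_length_add_append (l₁ := Q) (l₂ := [invLetter y]) 1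
    simpa using this
  rw [hd, h.1] at h1
  omega

theorem LB (h : IsWordSpellingLength lam) (y : Letter N) (V : List (Letter N)) :
    lam V ≤ 1 + lam (y :: V) := by
  rcases lam_cases h y V with hc | ⟨j, hj, hc⟩
  · omega
  · have hV := eq_take_cons_drop hj
    have h1 : lam V ≤ lam (V.take j) + lam (invLetter y :: V.drop (j + 1)) := by
      conv_lhs => rw [hV]
      exact subadd h _ _
    have h2 := le_init h (invLetter y) (V.drop (j + 1))
    omega

theorem LC (h : IsWordSpellingLength lam) (y : Letter N) (A : List (Letter N)) :
    lam (A ++ [y]) ≤ lam (y :: A) := by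
  rcases lam_cases h y A with hc | ⟨j, hj, hc⟩
  · have h1 := subadd h A [y]
    rw [lam_single h] at h1
    omega
  · have hA := eq_take_cons_drop hj
    have h1 : lam (A ++ [y]) ≤ lam (A.take j) + lam (invLetter y :: (A.drop (j + 1) ++ [y])) := by
      conv_lhs => rw [hA]
      have := subadd h (A.take j) (invLetter y :: (A.drop (j + 1) ++ [y]))
      simpa using this
    have h2 : lam (invLetter y :: (A.drop (j + 1) ++ [y])) ≤ lam (A.drop (j + 1)) := by
      have := lam_conj_le h (invLetter y) (A.drop (j + 1))
      rwa [invLetter_invLetter] at this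
    omega

theorem LG (h : IsWordSpellingLength lam) (y a : Letter N) (C : List (Letter N)) :
    lam (y :: a :: C) ≤ 1 + lam (y :: C) := by
  rcases lam_cases h y C with hc | ⟨j, hj, hc⟩
  · have h1 := le_init h y (a :: C)
    have h2 := le_init h a C
    omega
  · have hj' : (a :: C)[(j + 1)]? = some (invLetter y) := hj
    have h1 := le_cand h hj'
    simp only [List.take_succ_cons, List.drop_succ_cons] at h1
    have h2 := le_init h a (C.take j)
    omega

theorem LK (h : IsWordSpellingLength lam) (z a : Letter N) (P R : List (Letter N)) :
    lam (z :: a :: (P ++ invLetter a :: R)) ≤ lam P + lam (z :: R) := by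
  have key : ∀ R' : List (Letter N),
      lam (a :: (P ++ invLetter a :: R')) ≤ lam P + lam R' := by
    intro R'
    have hj : (P ++ invLetter a :: R')[P.length]? = some (invLetter a) := by
      rw [List.getElem?_append_right le_rfl]; simp
    have h1 := le_cand h hj
    rw [List.take_left] at h1
    have hd : (P ++ invLetter a :: R').drop (P.length + 1) = R' := by
      have := List.drop_length_add_append (l₁ := P) (l₂ := invLetter a :: R') 1
      simpa using this
    rw [hd] at h1
    exact h1
  rcases lam_cases h z R with hc | ⟨j, hj, hc⟩
  · have h1 := le_init h z (a :: (P ++ invLetter a :: R))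
    have h2 := key R
    omega
  · have hjlt := (List.getElem?_eq_some_iff.mp hj).1
    -- candidate at position P.length + j + 2 in rest := a :: (P ++ invLetter a :: R)
    have hj' : (a :: (P ++ invLetter a :: R))[(P.length + j + 2)]? = some (invLetter z) := by
      show (a :: (P ++ invLetter a :: R))[((P.length + j + 1) + 1)]? = _
      rw [List.getElem?_cons_succ]
      rw [List.getElem?_append_right (by omega)]
      have : P.length + j + 1 - P.length = j + 1 := by omega
      rw [this, List.getElem?_cons_succ]
      exact hj
    have h1 := le_cand h hj'
    have ht : (a :: (P ++ invLetter a :: R)).take (P.length + j + 2)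
        = a :: (P ++ invLetter a :: R.take j) := by
      show (a :: (P ++ invLetter a :: R)).take ((P.length + j + 1) + 1) = _
      rw [List.take_succ_cons]
      congr 1
      have : P.length + j + 1 = P.length + (j + 1) := by omega
      rw [this, List.take_length_add_append]
      simp
    have hd : (a :: (P ++ invLetter a :: R)).drop (P.length + j + 2 + 1) = R.drop (j + 1) := by
      show (a :: (P ++ invLetter a :: R)).drop ((P.length + j + 2) + 1) = _
      rw [List.drop_succ_cons]
      have : P.length + j + 2 = P.length + (j + 2) := by omega
      rw [this, List.drop_length_add_append]
      simp
    rw [ht, hd] at h1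
    have h2 := key (R.take j)
    omega

theorem LE' (h : IsWordSpellingLength lam) (y : Letter N) (A B : List (Letter N)) :
    lam (y :: (A ++ B)) ≤ lam A + lam (y :: B) := by
  rcases lam_cases h y B with hc | ⟨j, hj, hc⟩
  · have h1 := le_init h y (A ++ B)
    have h2 := subadd h A B
    omega
  · have hjlt := (List.getElem?_eq_some_iff.mp hj).1
    have hj' : (A ++ B)[(A.length + j)]? = some (invLetter y) := by
      rw [List.getElem?_append_right (by omega)]
      simpa using hj
    have h1 := le_cand h hj'
    rw [List.take_length_add_append, show A.length + j + 1 = A.length + (j + 1) from by omega,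
      List.drop_length_add_append] at h1
    have h2 := subadd h A (B.take j)
    omega

end WSL

namespace WSL
variable {N : ℕ} {lam : List (Letter N) → ℕ}

theorem LF (h : IsWordSpellingLength lam) :
    ∀ (A B : List (Letter N)) (y : Letter N),
      lam (y :: (A ++ B)) ≤ lam (A ++ [y]) + lam B := by
  suffices H : ∀ n (A : List (Letter N)), A.length ≤ n → ∀ (B : List (Letter N)) (y : Letter N),
      lam (y :: (A ++ B)) ≤ lam (A ++ [y]) + lam B by
    intro A B y; exact H A.length A le_rfl B y
  intro n
  induction n with
  | zero =>
    intro A hA B y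
    have : A = [] := by simpa using hA
    subst this
    have := le_init h y B
    rw [List.nil_append, List.nil_append, lam_single h]
    omega
  | succ n ih =>
    intro A hA B y
    match A with
    | [] =>
      have := le_init h y B
      rw [List.nil_append, List.nil_append, lam_single h]
      omega
    | a :: A₁ =>
      have hA1 : A₁.length ≤ n := by simpa using hA
      have hgoal : (a :: A₁) ++ B = a :: (A₁ ++ B) := rfl
      have hay : (a :: A₁) ++ [y] = a :: (A₁ ++ [y]) := rfl
      rw [hgoal, hay]
      rcases lam_cases h a (A₁ ++ [y]) with hc | ⟨j, hj, hc⟩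
      · have h1 := LG h y a (A₁ ++ B)
        have h2 := ih A₁ hA1 B y
        omega
      · have hjlt := (List.getElem?_eq_some_iff.mp hj).1
        rw [List.length_append, List.length_singleton] at hjlt
        by_cases hj2 : j = A₁.length
        · -- the matched letter is the final y : invLetter a = y
          subst hj2
          have hy : y = invLetter a := by
            have h0 := List.getElem?_concat_length (l := A₁) (a := y)
            rw [h0] at hj
            exact Eq.symm (Option.some.inj hj).symm
          have ha : a = invLetter y := by rw [hy, invLetter_invLetter]
          rw [List.take_left] at hc
          have hd : (A₁ ++ [y]).drop (A₁.length + 1) = [] := by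
            have := List.drop_length_add_append (l₁ := A₁) (l₂ := [y]) 1
            simpa using this
          rw [hd, h.1] at hc
          have h1 : lam (y :: (a :: (A₁ ++ B))) ≤
              lam (List.take 0 (a :: (A₁ ++ B))) + lam (List.drop 1 (a :: (A₁ ++ B))) := by
            refine le_cand h (j := 0) ?_
            rw [← ha]; rfl
          simp only [List.take_zero, List.drop_one, List.tail_cons, h.1] at h1
          have h2 := subadd h A₁ B
          omega
        · have hjlt' : j < A₁.length := by omega
          have hjA : A₁[j]? = some (invLetter a) := by
            rw [← List.getElem?_append_left hjlt']; exact hj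
          rw [List.take_append_of_le_length (le_of_lt hjlt'),
            List.drop_append_of_le_length hjlt'] at hc
          simp only [Nat.succ_eq_add_one] at hc
          have hA₁ := eq_take_cons_drop hjA
          have hword : a :: (A₁ ++ B) =
              a :: (A₁.take j ++ invLetter a :: (A₁.drop (j + 1) ++ B)) := by
            conv_lhs => rw [hA₁]
            simp
          rw [hword]
          have h1 := LK h y a (A₁.take j) (A₁.drop (j + 1) ++ B)
          have h2 := ih (A₁.drop (j + 1)) (by rw [List.length_drop]; omega) B y
          omega

end WSL

namespace WSL
variable {N : ℕ} {lam : List (Letter N) → ℕ}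

theorem descent_base (h : IsWordSpellingLength lam) (V : List (Letter N)) (x : Letter N) :
    lam (x :: invLetter x :: V) = lam (x :: invLetter x :: V) := rfl

theorem descent_nil (h : IsWordSpellingLength lam) (V : List (Letter N)) (x : Letter N) :
    lam (x :: invLetter x :: V) = lam V := by
  apply le_antisymm
  · have h1 : lam (x :: invLetter x :: V) ≤
        lam (List.take 0 (invLetter x :: V)) + lam (List.drop 1 (invLetter x :: V)) :=
      le_cand h (j := 0) rfl
    simpa [h.1] using h1
  · rcases lam_cases h x (invLetter x :: V) with hc | ⟨j, hj, hc⟩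
    · have := LB h (invLetter x) V
      omega
    · match j with
      | 0 =>
        simp only [List.take_zero, List.drop_succ_cons, List.drop_zero, h.1] at hc
        omega
      | k + 1 =>
        rw [List.getElem?_cons_succ] at hj
        simp only [List.take_succ_cons, List.drop_succ_cons] at hc
        have hV := eq_take_cons_drop hj
        have h1 : lam V ≤ lam (V.take k ++ [invLetter x]) + lam (V.drop (k + 1)) := by
          conv_lhs => rw [hV]
          have := subadd h (V.take k ++ [invLetter x]) (V.drop (k + 1))
          simpa using this
        have h2 := LC h (invLetter x) (V.take k)
        omega

theorem descent_step (h : IsWordSpellingLength lam) :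
    ∀ (U V : List (Letter N)) (x : Letter N),
      lam (U ++ x :: invLetter x :: V) = lam (U ++ V) := by
  suffices H : ∀ n (U : List (Letter N)), U.length ≤ n →
      ∀ (V : List (Letter N)) (x : Letter N),
        lam (U ++ x :: invLetter x :: V) = lam (U ++ V) by
    intro U V x; exact H U.length U le_rfl V x
  intro n
  induction n with
  | zero =>
    intro U hU V x
    have : U = [] := by simpa using hU
    subst this
    simpa using descent_nil h V x
  | succ n ih =>
    intro U hU V x
    match U with
    | [] => simpa using descent_nil h V x
    | u :: U₁ =>
      have hU₁ : U₁.length ≤ n := by simpa using hU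
      set x' := invLetter x with hx'
      have hcons : ∀ W : List (Letter N), (u :: U₁) ++ W = u :: (U₁ ++ W) := fun _ => rfl
      rw [hcons, hcons]
      -- index plumbing facts for R := U₁ ++ x :: x' :: V
      have hRget_lo : ∀ j, j < U₁.length →
          (U₁ ++ x :: x' :: V)[j]? = U₁[j]? := fun j hj => List.getElem?_append_left hj
      have hR'get_lo : ∀ j, j < U₁.length →
          (U₁ ++ V)[j]? = U₁[j]? := fun j hj => List.getElem?_append_left hj
      have hRget_hi : ∀ k, (U₁ ++ x :: x' :: V)[(U₁.length + 2 + k)]? = V[k]? := by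
        intro k
        rw [List.getElem?_append_right (by omega)]
        have : U₁.length + 2 + k - U₁.length = k + 2 := by omega
        rw [this]
        rfl
      have hR'get_hi : ∀ k, (U₁ ++ V)[(U₁.length + k)]? = V[k]? := by
        intro k
        rw [List.getElem?_append_right (by omega)]
        congr 1
        omega
      have hRtake_hi : ∀ k, (U₁ ++ x :: x' :: V).take (U₁.length + 2 + k)
          = U₁ ++ x :: x' :: V.take k := by
        intro k
        have e : U₁.length + 2 + k = U₁.length + (k + 2) := by omega
        rw [e, List.take_length_add_append]
        rfl
      have hR'take_hi : ∀ k, (U₁ ++ V).take (U₁.length + k) = U₁ ++ V.take k :=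
        fun k => List.take_length_add_append k
      have hRdrop_hi : ∀ k, (U₁ ++ x :: x' :: V).drop (U₁.length + 2 + k + 1)
          = V.drop (k + 1) := by
        intro k
        have e : U₁.length + 2 + k + 1 = U₁.length + (k + 3) := by omega
        rw [e, List.drop_length_add_append]
        rfl
      have hR'drop_hi : ∀ k, (U₁ ++ V).drop (U₁.length + k + 1) = V.drop (k + 1) := by
        intro k
        have e : U₁.length + k + 1 = U₁.length + (k + 1) := by omega
        rw [e, List.drop_length_add_append]
      apply le_antisymm
      · -- lam (u :: (U₁ ++ x :: x' :: V)) ≤ lam (u :: (U₁ ++ V))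
        rcases lam_cases h u (U₁ ++ V) with hc | ⟨j, hj, hc⟩
        · have h1 := le_init h u (U₁ ++ x :: x' :: V)
          have h2 := ih U₁ hU₁ V x
          rw [← hx'] at h2
          omega
        · have hjlt := (List.getElem?_eq_some_iff.mp hj).1
          rcases lt_or_ge j U₁.length with hlo | hhi
          · -- matched inside U₁
            have hjR : (U₁ ++ x :: x' :: V)[j]? = some (invLetter u) := by
              rw [hRget_lo j hlo, ← hR'get_lo j hlo]; exact hj
            have h1 := le_cand h hjR
            rw [List.take_append_of_le_length (le_of_lt hlo),
              List.drop_append_of_le_length hlo] at h1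
            rw [List.take_append_of_le_length (le_of_lt hlo),
              List.drop_append_of_le_length hlo] at hc
            simp only [Nat.succ_eq_add_one] at h1 hc
            have h2 := ih (U₁.drop (j + 1)) (by rw [List.length_drop]; omega) V x
            rw [← hx'] at h2
            omega
          · -- matched inside V
            obtain ⟨k, rfl⟩ : ∃ k, j = U₁.length + k := ⟨j - U₁.length, by omega⟩
            have hjV : V[k]? = some (invLetter u) := by rw [← hR'get_hi k]; exact hj
            have hjR : (U₁ ++ x :: x' :: V)[(U₁.length + 2 + k)]? = some (invLetter u) := by
              rw [hRget_hi k]; exact hjV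
            have h1 := le_cand h hjR
            rw [hRtake_hi k, hRdrop_hi k] at h1
            rw [hR'take_hi k, hR'drop_hi k] at hc
            have h2 : lam (U₁ ++ x :: x' :: V.take k) = lam (U₁ ++ V.take k) :=
              ih U₁ hU₁ (V.take k) x
            omega
      · -- lam (u :: (U₁ ++ V)) ≤ lam (u :: (U₁ ++ x :: x' :: V))
        rcases lam_cases h u (U₁ ++ x :: x' :: V) with hc | ⟨j, hj, hc⟩
        · have h1 := le_init h u (U₁ ++ V)
          have h2 := ih U₁ hU₁ V x
          rw [← hx'] at h2
          omega
        · rcases lt_or_ge j U₁.length with hlo | hhi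
          · have hjR' : (U₁ ++ V)[j]? = some (invLetter u) := by
              rw [hR'get_lo j hlo, ← hRget_lo j hlo]; exact hj
            have h1 := le_cand h hjR'
            rw [List.take_append_of_le_length (le_of_lt hlo),
              List.drop_append_of_le_length hlo] at h1
            rw [List.take_append_of_le_length (le_of_lt hlo),
              List.drop_append_of_le_length hlo] at hc
            simp only [Nat.succ_eq_add_one] at h1 hc
            have h2 := ih (U₁.drop (j + 1)) (by rw [List.length_drop]; omega) V x
            rw [← hx'] at h2
            omega
          · rcases Nat.lt_or_ge j (U₁.length + 2) with hmid | hhi2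
            · by_cases hj0 : j = U₁.length
              · -- matched the inserted x : u = invLetter x = x', i.e. x = invLetter u
                subst hj0
                have hgx : (U₁ ++ x :: x' :: V)[U₁.length]? = some x := by
                  rw [List.getElem?_append_right le_rfl]
                  simp
                rw [hgx] at hj
                have hxu : x = invLetter u := Option.some.inj hj
                have hux : u = x' := by rw [hx', hxu, invLetter_invLetter]
                have ht : (U₁ ++ x :: x' :: V).take U₁.length = U₁ := List.take_left
                have hd : (U₁ ++ x :: x' :: V).drop (U₁.length + 1) = x' :: V := by
                  have := List.drop_length_add_append (l₁ := U₁) (l₂ := x :: x' :: V) 1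
                  simpa using this
                rw [ht, hd] at hc
                have h1 := LE' h u U₁ V
                have h3 : lam (x' :: V) = lam (u :: V) := by rw [hux]
                omega
              · -- j = U₁.length + 1 : matched the inserted x' : u = x
                have hj1 : j = U₁.length + 1 := by omega
                subst hj1
                have hgx : (U₁ ++ x :: x' :: V)[(U₁.length + 1)]? = some x' := by
                  rw [List.getElem?_append_right (by omega)]
                  have : U₁.length + 1 - U₁.length = 1 := by omega
                  rw [this]
                  rfl
                rw [hgx] at hj
                have hxu : x' = invLetter u := Option.some.inj hj
                have hux : x = u := invLetter_inj (by rw [← hx', hxu])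
                have ht : (U₁ ++ x :: x' :: V).take (U₁.length + 1) = U₁ ++ [x] := by
                  rw [List.take_length_add_append]
                  rfl
                have hd : (U₁ ++ x :: x' :: V).drop (U₁.length + 1 + 1) = V := by
                  have e : U₁.length + 1 + 1 = U₁.length + 2 := by omega
                  rw [e]
                  have := List.drop_length_add_append (l₁ := U₁) (l₂ := x :: x' :: V) 2
                  simpa using this
                rw [ht, hd] at hc
                have h1 := LF h U₁ V u
                have h3 : lam (U₁ ++ [x]) = lam (U₁ ++ [u]) := by rw [hux]
                omega
            · -- matched inside V
              obtain ⟨k, rfl⟩ : ∃ k, j = U₁.length + 2 + k := ⟨j - U₁.length - 2, by omega⟩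
              have hjV : V[k]? = some (invLetter u) := by rw [← hRget_hi k]; exact hj
              have hjR' : (U₁ ++ V)[(U₁.length + k)]? = some (invLetter u) := by
                rw [hR'get_hi k]; exact hjV
              have h1 := le_cand h hjR'
              rw [hR'take_hi k, hR'drop_hi k] at h1
              rw [hRtake_hi k, hRdrop_hi k] at hc
              have h2 : lam (U₁ ++ x :: x' :: V.take k) = lam (U₁ ++ V.take k) :=
                ih U₁ hU₁ (V.take k) x
              omega

end WSL

namespace WSL
variable {N : ℕ} {lam : List (Letter N) → ℕ}

theorem lam_step (h : IsWordSpellingLength lam) {L₁ L₂ : List (Letter N)}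
    (s : FreeGroup.Red.Step L₁ L₂) : lam L₁ = lam L₂ := by
  cases s with
  | @not L V x b => exact descent_step h L V (x, b)

theorem lam_red (h : IsWordSpellingLength lam) {L₁ L₂ : List (Letter N)}
    (r : FreeGroup.Red L₁ L₂) : lam L₁ = lam L₂ := by
  induction r with
  | refl => rfl
  | tail _ s ih => exact ih.trans (lam_step h s)

theorem lam_descends (h : IsWordSpellingLength lam) {L₁ L₂ : List (Letter N)}
    (e : FreeGroup.mk L₁ = FreeGroup.mk L₂) : lam L₁ = lam L₂ := by
  obtain ⟨L₃, r₁, r₂⟩ := FreeGroup.Red.exact.mp e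
  rw [lam_red h r₁, lam_red h r₂]

theorem invRev_single (x : Letter N) : FreeGroup.invRev [x] = [invLetter x] := by
  simp [FreeGroup.invRev, invLetter]

theorem invRev_cons (a : Letter N) (A : List (Letter N)) :
    FreeGroup.invRev (a :: A) = FreeGroup.invRev A ++ [invLetter a] := by
  simp [FreeGroup.invRev, invLetter]

theorem mk_single (x : Letter N) :
    FreeGroup.mk [x] =
      (if x.2 then FreeGroup.of x.1 else (FreeGroup.of x.1)⁻¹ : FreeGroup (Fin N)) := by
  obtain ⟨i, b⟩ := x
  cases b
  · rw [if_neg (by simp)]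
    rw [show (FreeGroup.of i : FreeGroup (Fin N)) = FreeGroup.mk [(i, true)] from rfl,
      FreeGroup.inv_mk]
    congr 1
  · rw [if_pos rfl]
    rfl

theorem mk_inv_single (x : Letter N) :
    (FreeGroup.mk [x] : FreeGroup (Fin N))⁻¹ = FreeGroup.mk [invLetter x] := by
  rw [FreeGroup.inv_mk, invRev_single]

theorem exists_spelling (g : FreeGroup (Fin N)) : ∃ L, IsSpelling g L := by
  rw [← FreeGroup.mk_toWord (x := g)]
  generalize g.toWord = W
  induction W with
  | nil => exact ⟨[], by simp [IsSpelling, FreeGroup.one_eq_mk]⟩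
  | cons x W ih =>
    obtain ⟨L, hL⟩ := ih
    refine ⟨(1, x.1, x.2) :: L, ?_⟩
    unfold IsSpelling at *
    rw [List.map_cons, List.prod_cons, hL]
    rw [show FreeGroup.mk (x :: W) = FreeGroup.mk [x] * FreeGroup.mk W from
      (FreeGroup.mul_mk (L₁ := [x]) (L₂ := W)).symm]
    congr 1
    rw [mk_single]
    simp [spellingFactor]

theorem sLen_le {g : FreeGroup (Fin N)} {L} (hL : IsSpelling g L) :
    spellingLength g ≤ L.length := Nat.sInf_le ⟨L, hL, rfl⟩

theorem exists_min (g : FreeGroup (Fin N)) :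
    ∃ L, IsSpelling g L ∧ L.length = spellingLength g := by
  obtain ⟨L, hL⟩ := exists_spelling g
  have hne : {r | ∃ L', IsSpelling g L' ∧ L'.length = r}.Nonempty := ⟨L.length, L, hL, rfl⟩
  exact Nat.sInf_mem hne

theorem sLen_mul (g g' : FreeGroup (Fin N)) :
    spellingLength (g * g') ≤ spellingLength g + spellingLength g' := by
  obtain ⟨L₁, hL₁, hl₁⟩ := exists_min g
  obtain ⟨L₂, hL₂, hl₂⟩ := exists_min g'
  have : IsSpelling (g * g') (L₁ ++ L₂) := by
    unfold IsSpelling at *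
    rw [List.map_append, List.prod_append, hL₁, hL₂]
  calc spellingLength (g * g') ≤ (L₁ ++ L₂).length := sLen_le this
    _ = spellingLength g + spellingLength g' := by rw [List.length_append, hl₁, hl₂]

theorem sLen_conj_le (a g : FreeGroup (Fin N)) :
    spellingLength (a * g * a⁻¹) ≤ spellingLength g := by
  obtain ⟨L, hL, hlen⟩ := exists_min g
  have key : ∀ L : List (FreeGroup (Fin N) × Fin N × Bool),
      (((L.map fun f => (a * f.1, f.2)).map spellingFactor).prod)
        = a * (L.map spellingFactor).prod * a⁻¹ := by
    intro L
    induction L with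
    | nil => simp
    | cons f L ih =>
      simp only [List.map_cons, List.prod_cons, ih, spellingFactor]
      group
  have : IsSpelling (a * g * a⁻¹) (L.map fun f => (a * f.1, f.2)) := by
    unfold IsSpelling at *
    rw [key, hL]
  calc spellingLength (a * g * a⁻¹) ≤ (L.map fun f => (a * f.1, f.2)).length := sLen_le this
    _ = spellingLength g := by rw [List.length_map, hlen]

theorem sLen_single (x : Letter N) : spellingLength (FreeGroup.mk [x]) ≤ 1 := by
  have : IsSpelling (FreeGroup.mk [x]) [(1, x.1, x.2)] := by
    unfold IsSpelling
    rw [mk_single]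
    simp [spellingFactor]
  simpa using sLen_le this

theorem sLen_le_lam (h : IsWordSpellingLength lam) :
    ∀ U : List (Letter N), spellingLength (FreeGroup.mk U) ≤ lam U := by
  suffices H : ∀ n (U : List (Letter N)), U.length ≤ n →
      spellingLength (FreeGroup.mk U) ≤ lam U by
    intro U; exact H U.length U le_rfl
  intro n
  induction n with
  | zero =>
    intro U hU
    have : U = [] := by simpa using hU
    subst this
    rw [h.1]
    have : IsSpelling (FreeGroup.mk ([] : List (Letter N))) [] := by
      simp [IsSpelling, FreeGroup.one_eq_mk]
    simpa using sLen_le this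
  | succ n ih =>
    intro U hU
    match U with
    | [] =>
      rw [h.1]
      have : IsSpelling (FreeGroup.mk ([] : List (Letter N))) [] := by
        simp [IsSpelling, FreeGroup.one_eq_mk]
      simpa using sLen_le this
    | x :: rest =>
      have hrest : rest.length ≤ n := by simpa using hU
      have hsplit : FreeGroup.mk (x :: rest) = FreeGroup.mk [x] * FreeGroup.mk rest :=
        (FreeGroup.mul_mk (L₁ := [x]) (L₂ := rest)).symm
      rcases lam_cases h x rest with hc | ⟨j, hj, hc⟩
      · rw [hsplit, hc]
        calc spellingLength (FreeGroup.mk [x] * FreeGroup.mk rest)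
            ≤ spellingLength (FreeGroup.mk [x]) + spellingLength (FreeGroup.mk rest) :=
              sLen_mul _ _
          _ ≤ 1 + lam rest := add_le_add (sLen_single x) (ih rest hrest)
      · have hdecomp := eq_take_cons_drop hj
        have hjlt := (List.getElem?_eq_some_iff.mp hj).1
        have hgrp : FreeGroup.mk (x :: rest) =
            (FreeGroup.mk [x] * FreeGroup.mk (rest.take j) * (FreeGroup.mk [x])⁻¹) *
              FreeGroup.mk (rest.drop (j + 1)) := by
          rw [mk_inv_single]
          rw [FreeGroup.mul_mk, FreeGroup.mul_mk, FreeGroup.mul_mk]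
          congr 1
          conv_lhs => rw [show (x :: rest) = [x] ++ rest from rfl, hdecomp]
          simp
        rw [hgrp, hc]
        calc spellingLength _
            ≤ spellingLength (FreeGroup.mk [x] * FreeGroup.mk (rest.take j) *
                (FreeGroup.mk [x])⁻¹) + spellingLength (FreeGroup.mk (rest.drop (j + 1))) :=
              sLen_mul _ _
          _ ≤ spellingLength (FreeGroup.mk (rest.take j)) +
                spellingLength (FreeGroup.mk (rest.drop (j + 1))) := by
              have := sLen_conj_le (FreeGroup.mk [x]) (FreeGroup.mk (rest.take j))
              omega
          _ ≤ lam (rest.take j) + lam (rest.drop (j + 1)) := by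
              have h1 := ih (rest.take j) (by rw [List.length_take]; omega)
              have h2 := ih (rest.drop (j + 1)) (by rw [List.length_drop]; omega)
              omega

theorem lam_conj_word (h : IsWordSpellingLength lam) :
    ∀ (A : List (Letter N)) (x : Letter N), lam (A ++ x :: FreeGroup.invRev A) ≤ 1 := by
  intro A
  induction A with
  | nil =>
    intro x
    simp only [List.nil_append, FreeGroup.invRev, List.map_nil, List.reverse_nil]
    rw [lam_single h]
  | cons a A ih =>
    intro x
    rw [invRev_cons]
    have hword : (a :: A) ++ x :: (FreeGroup.invRev A ++ [invLetter a]) =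
        a :: ((A ++ x :: FreeGroup.invRev A) ++ [invLetter a]) := by simp
    rw [hword]
    exact le_trans (lam_conj_le h a _) (ih x)

theorem lam_le_spelling (h : IsWordSpellingLength lam) :
    ∀ (L : List (FreeGroup (Fin N) × Fin N × Bool)) (W : List (Letter N)),
      FreeGroup.mk W = (L.map spellingFactor).prod → lam W ≤ L.length := by
  intro L
  induction L with
  | nil =>
    intro W hW
    simp only [List.map_nil, List.prod_nil] at hW
    rw [lam_descends h (hW.trans FreeGroup.one_eq_mk)]
    simp [h.1]
  | cons f L ih =>
    intro W hW
    set A := f.1.toWord with hA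
    set C := ((L.map spellingFactor).prod).toWord with hC
    set x : Letter N := (f.2.1, f.2.2) with hx
    have hfact : FreeGroup.mk (A ++ x :: FreeGroup.invRev A) = spellingFactor f := by
      rw [show A ++ x :: FreeGroup.invRev A = A ++ [x] ++ FreeGroup.invRev A by simp]
      rw [← FreeGroup.mul_mk, ← FreeGroup.mul_mk, ← FreeGroup.inv_mk]
      rw [hA, FreeGroup.mk_toWord, mk_single]
      rfl
    have hW' : FreeGroup.mk W = FreeGroup.mk ((A ++ x :: FreeGroup.invRev A) ++ C) := by
      rw [← FreeGroup.mul_mk, hfact, hC, FreeGroup.mk_toWord, ← List.prod_cons,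
        ← List.map_cons]
      exact hW
    rw [lam_descends h hW']
    have h1 := subadd h (A ++ x :: FreeGroup.invRev A) C
    have h2 := lam_conj_word h A x
    have h3 := ih C (by rw [hC, FreeGroup.mk_toWord])
    simp only [List.length_cons]
    omega

end WSL

/-- the word-level spelling length `λ` descends to the free group, where it
coincides with the spelling length `Λ`. -/
theorem wordSpellingLength_descends_and_eq_spellingLength {N : ℕ}
    (lam : List (Letter N) → ℕ) (hlam : IsWordSpellingLength lam) :
    (∀ U U' : List (Letter N), FreeGroup.mk U = FreeGroup.mk U' → lam U = lam U') ∧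
      ∀ U : List (Letter N), lam U = spellingLength (FreeGroup.mk U) := by
  constructor
  · intro U U' e
    exact WSL.lam_descends hlam e
  · intro U
    apply le_antisymm
    · obtain ⟨L, hL, hlen⟩ := WSL.exists_min (FreeGroup.mk U)
      rw [← hlen]
      exact WSL.lam_le_spelling hlam L U hL.symm
    · exact WSL.sLen_le_lam hlam U
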